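/- Let λ > 0, θ ∈ ℝ, and write g̃(r) = √(B₁(r) + 2√(B₂(r))) where B₁(r) = 2 + 2λ²(r+1) and B₂(r) = (1+λ²(r+1))² − 4λ⁴ r cos²θ. Then for 0 < r ≤ 16δ²/(1+4λ²) with 0 < δ ≤ 1/100, one has |g̃''(r)| ≤ C(λ⁴ + λ⁸) for an absolute constant C. -/

import Mathlib

open Real Filter Set
set_option maxHeartbeats 2000000

private lemma stmt14_bound (u Sr Qr Pr : ℝ) (hu0 : 0 < u) (hS1 : 1 ≤ Sr) (hQ2 : 2 ≤ Qr)
    (hPrb : |Pr| ≤ 2 * u + 8 * u ^ 2) :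
    |((2 * u ^ 2 * Sr - Pr * (Pr / (2 * Sr))) / Sr ^ 2 * (2 * Qr) -
        (2 * u + Pr / Sr) * (2 * ((2 * u + 2 * (Pr / (2 * Sr))) / (2 * Qr)))) /
        (2 * Qr) ^ 2| ≤ 100 * (u ^ 2 + u ^ 4) := by
  have hSpos : (0:ℝ) < Sr := by linarith
  have hQpos : (0:ℝ) < Qr := by linarith
  have hEexp : ((2 * u ^ 2 * Sr - Pr * (Pr / (2 * Sr))) / Sr ^ 2 * (2 * Qr) -
        (2 * u + Pr / Sr) * (2 * ((2 * u + 2 * (Pr / (2 * Sr))) / (2 * Qr)))) /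
        (2 * Qr) ^ 2 =
      (2 * u ^ 2 / Sr - Pr ^ 2 / (2 * Sr ^ 3)) / (2 * Qr) -
        (2 * u + Pr / Sr) ^ 2 / (4 * Qr ^ 3) := by
    field_simp
    ring
  rw [hEexp]
  have hA : |2 * u ^ 2 / Sr - Pr ^ 2 / (2 * Sr ^ 3)| ≤ 2 * u ^ 2 + Pr ^ 2 / 2 := by
    have h1 : 2 * u ^ 2 / Sr ≤ 2 * u ^ 2 := div_le_self (by positivity) hS1
    have h1' : 0 ≤ 2 * u ^ 2 / Sr := div_nonneg (by positivity) hSpos.le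
    have h2 : Pr ^ 2 / (2 * Sr ^ 3) ≤ Pr ^ 2 / 2 :=
      div_le_div₀ (sq_nonneg Pr) le_rfl (by norm_num) (by nlinarith)
    have h2' : 0 ≤ Pr ^ 2 / (2 * Sr ^ 3) := div_nonneg (sq_nonneg _) (by nlinarith)
    calc |2 * u ^ 2 / Sr - Pr ^ 2 / (2 * Sr ^ 3)| ≤
        |2 * u ^ 2 / Sr| + |Pr ^ 2 / (2 * Sr ^ 3)| := abs_sub _ _
      _ ≤ 2 * u ^ 2 + Pr ^ 2 / 2 := by
          rw [abs_of_nonneg h1', abs_of_nonneg h2']; linarith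
  have hM : |2 * u + Pr / Sr| ≤ 4 * u + 8 * u ^ 2 := by
    have h1 : |Pr / Sr| ≤ |Pr| := by
      rw [abs_div, abs_of_pos hSpos]
      exact div_le_self (abs_nonneg _) hS1
    calc |2 * u + Pr / Sr| ≤ |2 * u| + |Pr / Sr| := abs_add_le _ _
      _ ≤ 2 * u + (2 * u + 8 * u ^ 2) := by
          rw [abs_of_nonneg (by positivity)]; linarith
      _ ≤ 4 * u + 8 * u ^ 2 := by linarith
  have t1 : |(2 * u ^ 2 / Sr - Pr ^ 2 / (2 * Sr ^ 3)) / (2 * Qr)| ≤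
      (2 * u ^ 2 + Pr ^ 2 / 2) / 4 := by
    rw [abs_div, abs_of_pos (by linarith : (0:ℝ) < 2 * Qr)]
    exact div_le_div₀ (by positivity) hA (by norm_num) (by linarith)
  have t2 : |(2 * u + Pr / Sr) ^ 2 / (4 * Qr ^ 3)| ≤ (4 * u + 8 * u ^ 2) ^ 2 / 32 := by
    rw [abs_of_nonneg (div_nonneg (sq_nonneg _) (by nlinarith))]
    have hsq : (2 * u + Pr / Sr) ^ 2 ≤ (4 * u + 8 * u ^ 2) ^ 2 := by
      have h := abs_le.mp hM
      nlinarith [h.1, h.2]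
    exact div_le_div₀ (by positivity) hsq (by norm_num) (by nlinarith)
  have hfinal : |(2 * u ^ 2 / Sr - Pr ^ 2 / (2 * Sr ^ 3)) / (2 * Qr) -
      (2 * u + Pr / Sr) ^ 2 / (4 * Qr ^ 3)| ≤
      (2 * u ^ 2 + Pr ^ 2 / 2) / 4 + (4 * u + 8 * u ^ 2) ^ 2 / 32 :=
    (abs_sub _ _).trans (by linarith)
  refine hfinal.trans ?_
  have hPsq : Pr ^ 2 ≤ (2 * u + 8 * u ^ 2) ^ 2 := by
    have h := abs_le.mp hPrb
    nlinarith [h.1, h.2]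
  nlinarith [sq_nonneg (u - u ^ 2), sq_nonneg u, hu0.le, hPsq]

private lemma stmt14_aux (u c r : ℝ) (hu0 : 0 < u) (hc2 : c ^ 2 ≤ 1)
    (hr : 0 < r) (hr1 : r ≤ 1) :
    |deriv (deriv (fun x : ℝ =>
        Real.sqrt ((2 + 2 * u * (x + 1)) +
          2 * Real.sqrt ((1 + u * (x + 1)) ^ 2 - 4 * u ^ 2 * x * c ^ 2)))) r|
      ≤ 100 * (u ^ 2 + u ^ 4) := by
  set S : ℝ → ℝ := fun x => Real.sqrt ((1 + u * (x + 1)) ^ 2 - 4 * u ^ 2 * x * c ^ 2) with hSdef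
  set P : ℝ → ℝ := fun x => 2 * u * (1 + u * (x + 1)) - 4 * u ^ 2 * c ^ 2 with hPdef
  set G : ℝ → ℝ := fun x => (2 * u + P x / S x) /
      (2 * Real.sqrt ((2 + 2 * u * (x + 1)) + 2 * S x)) with hGdef
  have hBge : ∀ x : ℝ, 0 < x → 1 ≤ (1 + u * (x + 1)) ^ 2 - 4 * u ^ 2 * x * c ^ 2 := by
    intro x hx
    nlinarith [mul_le_mul_of_nonneg_left hc2 (show (0:ℝ) ≤ 4 * u ^ 2 * x by positivity),
      sq_nonneg (u * x - u), mul_nonneg hu0.le hx.le]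
  have hS1 : ∀ x : ℝ, 0 < x → 1 ≤ S x := by
    intro x hx
    have := Real.sqrt_le_sqrt (hBge x hx)
    simpa [hSdef] using this
  have hSne : ∀ x : ℝ, 0 < x → S x ≠ 0 := fun x hx =>
    ne_of_gt (by linarith [hS1 x hx])
  have hArg4 : ∀ x : ℝ, 0 < x → 4 ≤ (2 + 2 * u * (x + 1)) + 2 * S x := by
    intro x hx
    have h1 := hS1 x hx
    have h2 : 0 ≤ 2 * u * (x + 1) := by positivity
    linarith
  have hQ2 : ∀ x : ℝ, 0 < x → 2 ≤ Real.sqrt ((2 + 2 * u * (x + 1)) + 2 * S x) := by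
    intro x hx
    have := Real.sqrt_le_sqrt (hArg4 x hx)
    have h4 : Real.sqrt 4 = 2 := by
      rw [show (4:ℝ) = 2 ^ 2 by norm_num, Real.sqrt_sq (by norm_num)]
    linarith [h4 ▸ this]
  have hB' : ∀ x : ℝ, HasDerivAt
      (fun y : ℝ => (1 + u * (y + 1)) ^ 2 - 4 * u ^ 2 * y * c ^ 2) (P x) x := by
    intro x
    have h1 : HasDerivAt (fun y : ℝ => 1 + u * (y + 1)) u x := by
      simpa using (((hasDerivAt_id x).add_const 1).const_mul u).const_add 1
    have h2 : HasDerivAt (fun y : ℝ => (1 + u * (y + 1)) ^ 2) (2 * (1 + u * (x + 1)) * u) x := by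
      simpa using h1.fun_pow 2
    have h3 : HasDerivAt (fun y : ℝ => 4 * u ^ 2 * y * c ^ 2) (4 * u ^ 2 * c ^ 2) x := by
      simpa using (((hasDerivAt_id x).const_mul (4 * u ^ 2)).mul_const (c ^ 2))
    refine (h2.sub h3).congr_deriv ?_
    simp [hPdef]; ring
  have hS' : ∀ x : ℝ, 0 < x → HasDerivAt S (P x / (2 * S x)) x := by
    intro x hx
    exact (hB' x).sqrt (ne_of_gt (by linarith [hBge x hx]))
  have hf' : ∀ x : ℝ, 0 < x → HasDerivAt
      (fun y : ℝ => Real.sqrt ((2 + 2 * u * (y + 1)) + 2 * S y))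
      ((2 * u + 2 * (P x / (2 * S x))) /
        (2 * Real.sqrt ((2 + 2 * u * (x + 1)) + 2 * S x))) x := by
    intro x hx
    have h1 : HasDerivAt (fun y : ℝ => 2 + 2 * u * (y + 1)) (2 * u) x := by
      simpa using (((hasDerivAt_id x).add_const 1).const_mul (2 * u)).const_add 2
    have h2 : HasDerivAt (fun y : ℝ => (2 + 2 * u * (y + 1)) + 2 * S y)
        (2 * u + 2 * (P x / (2 * S x))) x := h1.add ((hS' x hx).const_mul 2)
    exact h2.sqrt (ne_of_gt (by linarith [hArg4 x hx]))
  have hderiv : ∀ x ∈ Set.Ioi (0:ℝ), deriv (fun y : ℝ =>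
      Real.sqrt ((2 + 2 * u * (y + 1)) + 2 * S y)) x = G x := by
    intro x hx
    rw [(hf' x hx).deriv]
    have hs := hSne x hx
    rw [hGdef]
    congr 1
    field_simp
  have hEq : deriv (fun x : ℝ =>
      Real.sqrt ((2 + 2 * u * (x + 1)) +
        2 * Real.sqrt ((1 + u * (x + 1)) ^ 2 - 4 * u ^ 2 * x * c ^ 2))) =ᶠ[nhds r] G :=
    Filter.eventuallyEq_of_mem (Ioi_mem_nhds hr) hderiv
  rw [hEq.deriv_eq]
  have hP' : HasDerivAt P (2 * u ^ 2) r := by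
    have h1 : HasDerivAt (fun y : ℝ => 1 + u * (y + 1)) u r := by
      simpa using (((hasDerivAt_id r).add_const 1).const_mul u).const_add 1
    have h2 := (h1.const_mul (2 * u)).sub_const (4 * u ^ 2 * c ^ 2)
    have he : (2:ℝ) * u * u = 2 * u ^ 2 := by ring
    rw [he] at h2
    exact h2
  have hN : HasDerivAt (fun x : ℝ => 2 * u + P x / S x)
      ((2 * u ^ 2 * S r - P r * (P r / (2 * S r))) / (S r) ^ 2) r :=
    (hP'.div (hS' r hr) (hSne r hr)).const_add (2 * u)
  have hD : HasDerivAt (fun x : ℝ => 2 * Real.sqrt ((2 + 2 * u * (x + 1)) + 2 * S x))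
      (2 * ((2 * u + 2 * (P r / (2 * S r))) /
        (2 * Real.sqrt ((2 + 2 * u * (r + 1)) + 2 * S r)))) r :=
    (hf' r hr).const_mul 2
  have hQne : (2 : ℝ) * Real.sqrt ((2 + 2 * u * (r + 1)) + 2 * S r) ≠ 0 :=
    ne_of_gt (by linarith [hQ2 r hr])
  have hG' : HasDerivAt G
      (((2 * u ^ 2 * S r - P r * (P r / (2 * S r))) / (S r) ^ 2 *
          (2 * Real.sqrt ((2 + 2 * u * (r + 1)) + 2 * S r)) -
        (2 * u + P r / S r) *
          (2 * ((2 * u + 2 * (P r / (2 * S r))) /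
            (2 * Real.sqrt ((2 + 2 * u * (r + 1)) + 2 * S r))))) /
        (2 * Real.sqrt ((2 + 2 * u * (r + 1)) + 2 * S r)) ^ 2) r :=
    hN.div hD hQne
  rw [hG'.deriv]
  have hPrb : |P r| ≤ 2 * u + 8 * u ^ 2 := by
    rw [abs_le]
    constructor
    · have h1 : 0 ≤ 2 * u * (1 + u * (r + 1)) := by positivity
      have h2 : 4 * u ^ 2 * c ^ 2 ≤ 4 * u ^ 2 := by nlinarith [sq_nonneg u]
      simp only [hPdef]
      nlinarith
    · have h2 : 0 ≤ 4 * u ^ 2 * c ^ 2 := by positivity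
      simp only [hPdef]
      nlinarith
  exact stmt14_bound u (S r) (Real.sqrt ((2 + 2 * u * (r + 1)) + 2 * S r)) (P r)
    hu0 (hS1 r hr) (hQ2 r hr) hPrb

theorem stmt14 :
    ∃ C > (0 : ℝ), ∀ lam θ δ r : ℝ, 0 < lam → 0 < δ → δ ≤ 1 / 100 →
      0 < r → r ≤ 16 * δ ^ 2 / (1 + 4 * lam ^ 2) →
      |deriv (deriv (fun r : ℝ =>
          Real.sqrt ((2 + 2 * lam ^ 2 * (r + 1)) +
            2 * Real.sqrt ((1 + lam ^ 2 * (r + 1)) ^ 2 -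
              4 * lam ^ 4 * r * Real.cos θ ^ 2)))) r| ≤ C * (lam ^ 4 + lam ^ 8) := by
  refine ⟨100, by norm_num, ?_⟩
  intro lam θ δ r hlam hδ hδle hr hrle
  have hr1 : r ≤ 1 := by
    have h2 : (1:ℝ) ≤ 1 + 4 * lam ^ 2 := by nlinarith
    have := hrle.trans (div_le_self (by positivity) h2)
    nlinarith
  have hc2 : Real.cos θ ^ 2 ≤ 1 := by
    nlinarith [Real.sin_sq_add_cos_sq θ, sq_nonneg (Real.sin θ)]
  have h4 : (lam:ℝ) ^ 4 = (lam ^ 2) ^ 2 := by ring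
  have h8 : (lam:ℝ) ^ 8 = (lam ^ 2) ^ 4 := by ring
  rw [h4, h8]
  exact stmt14_aux (lam ^ 2) (Real.cos θ) r (by positivity) hc2 hr hr1
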